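/- Let V(x) = x⁴/4 − x²/2, and for n ∈ ℕ let H ∈ C^{n+1}(ℝ) satisfy H^{(i)}(1) = H^{(i)}(−1) = 0 for 0 ≤ i ≤ n and the polynomial growth bound |H(x)| ≤ C₀(1 + |x|^q) for some C₀, q > 0. Then there exist ε₀ > 0 and C > 0 such that for all 0 < ε < ε₀: |∫_ℝ H(x) μ_ε(dx)| ≤ C ε^{(n+1)/2}, where μ_ε(dx) = Z_ε^{−1} e^{−V(x)/ε} dx. -/

import Mathlib

open Real MeasureTheory Set

lemma mvt_bound {H : ℝ → ℝ} (hd : Differentiable ℝ H) (a x : ℝ) {C : ℝ}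
    (hC : ∀ t ∈ Set.uIcc a x, |deriv H t| ≤ C) (h0 : H a = 0) :
    |H x| ≤ C * |x - a| := by
  have := Convex.norm_image_sub_le_of_norm_hasDerivWithin_le
    (f := H) (f' := deriv H) (s := Set.uIcc a x)
    (fun t _ => (hd t).hasDerivAt.hasDerivWithinAt) (fun t ht => hC t ht)
    (convex_uIcc a x) Set.left_mem_uIcc Set.right_mem_uIcc
  simpa [h0, Real.norm_eq_abs] using this

lemma abs_le_of_mem_uIcc {a x t : ℝ} (ht : t ∈ Set.uIcc a x) : |t - a| ≤ |x - a| := by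
  rcases Set.mem_uIcc.mp ht with ⟨h1, h2⟩ | ⟨h1, h2⟩
  · rw [abs_of_nonneg (by linarith), abs_of_nonneg (by linarith)]; linarith
  · rw [abs_of_nonpos (by linarith), abs_of_nonpos (by linarith)]; linarith

lemma vanish_bound (a : ℝ) : ∀ (n : ℕ) (H : ℝ → ℝ), ContDiff ℝ (n+1) H →
    (∀ i ≤ n, iteratedDeriv i H a = 0) →
    ∃ M : ℝ, 0 < M ∧ ∀ x ∈ Set.Icc (a-1) (a+1), |H x| ≤ M * |x - a|^(n+1) := by
  intro n
  induction n with
  | zero =>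
    intro H hH hv
    have hd : Differentiable ℝ H := hH.differentiable (by norm_num)
    have hc : Continuous (deriv H) := hH.continuous_deriv (by norm_num)
    obtain ⟨M, hM⟩ := (isCompact_Icc (a := a-1) (b := a+1)).exists_bound_of_continuousOn
      hc.continuousOn
    refine ⟨max M 0 + 1, by positivity, fun x hx => ?_⟩
    have h0 : H a = 0 := by simpa [iteratedDeriv_zero] using hv 0 le_rfl
    have hsub : Set.uIcc a x ⊆ Set.Icc (a-1) (a+1) :=
      Set.ordConnected_Icc.uIcc_subset ⟨by linarith [hx.1], by linarith [hx.2]⟩ hx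
    have := mvt_bound hd a x (C := max M 0 + 1)
      (fun t ht => le_trans (hM t (hsub ht)) (by
        have := le_max_left M 0; linarith)) h0
    simpa using this
  | succ n ih =>
    intro H hH hv
    have hH' : ContDiff ℝ ((n:ℕ∞)+1) (deriv H) := by
      have : ContDiff ℝ ((n:WithTop ℕ∞)+1+1) H := by exact_mod_cast hH
      exact_mod_cast (contDiff_succ_iff_deriv.mp this).2.2
    have hd : Differentiable ℝ H := hH.differentiable (by norm_num)
    obtain ⟨M, hMpos, hM⟩ := ih (deriv H) hH' (fun i hi => by
      rw [← iteratedDeriv_succ']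
      exact hv (i+1) (Nat.succ_le_succ hi))
    refine ⟨M, hMpos, fun x hx => ?_⟩
    have h0 : H a = 0 := by simpa [iteratedDeriv_zero] using hv 0 (Nat.zero_le _)
    have hsub : Set.uIcc a x ⊆ Set.Icc (a-1) (a+1) :=
      Set.ordConnected_Icc.uIcc_subset ⟨by linarith [hx.1], by linarith [hx.2]⟩ hx
    have key : ∀ t ∈ Set.uIcc a x, |deriv H t| ≤ M * |x - a|^(n+1) := by
      intro t ht
      calc |deriv H t| ≤ M * |t - a|^(n+1) := hM t (hsub ht)
        _ ≤ M * |x - a|^(n+1) := by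
            apply mul_le_mul_of_nonneg_left (pow_le_pow_left₀ (abs_nonneg _)
              (abs_le_of_mem_uIcc ht) _) hMpos.le
    have := mvt_bound hd a x key h0
    calc |H x| ≤ M * |x - a|^(n+1) * |x - a| := this
      _ = M * |x - a|^(n+2) := by ring

lemma pow_mul_exp_le (k : ℕ) (t : ℝ) (ht : 0 ≤ t) :
    t^k * Real.exp (-(t^2)/8) ≤ 1 + 8^k * (k.factorial : ℝ) := by
  have h1 : t^k ≤ 1 + (t^2)^k := by
    rcases le_total t 1 with h | h
    · have h2 : t^k ≤ 1 := pow_le_one₀ ht h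
      have : (0:ℝ) ≤ (t^2)^k := by positivity
      linarith
    · have : t^k ≤ (t^2)^k := pow_le_pow_left₀ ht (by nlinarith) k
      linarith
  have h2 : (t^2/8)^k ≤ (k.factorial : ℝ) * Real.exp (t^2/8) := by
    have h := Real.pow_div_factorial_le_exp (x := t^2/8) (by positivity) k
    rw [div_le_iff₀ (by positivity : (0:ℝ) < (k.factorial:ℝ))] at h
    linarith [h]
  have e1 : Real.exp (-(t^2)/8) ≤ 1 := Real.exp_le_one_iff.mpr (by nlinarith [sq_nonneg t])
  have e2 : Real.exp (-(t^2)/8) * Real.exp (t^2/8) = 1 := by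
    rw [← Real.exp_add]; ring_nf; exact Real.exp_zero
  have e3 : (0:ℝ) < Real.exp (-(t^2)/8) := Real.exp_pos _
  have h3 : (t^2)^k = 8^k * (t^2/8)^k := by rw [← mul_pow]; ring_nf
  have h4 : (t^2)^k * Real.exp (-(t^2)/8) ≤ 8^k * (k.factorial:ℝ) := by
    calc (t^2)^k * Real.exp (-(t^2)/8) = 8^k * ((t^2/8)^k * Real.exp (-(t^2)/8)) := by
          rw [h3]; ring
      _ ≤ 8^k * ((k.factorial : ℝ) * Real.exp (t^2/8) * Real.exp (-(t^2)/8)) := by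
          apply mul_le_mul_of_nonneg_left (mul_le_mul_of_nonneg_right h2 e3.le) (by positivity)
      _ = 8^k * (k.factorial:ℝ) := by rw [mul_assoc, mul_comm (Real.exp (t^2/8)), e2]; ring
  have h5 : t^k * Real.exp (-(t^2)/8) ≤ (1 + (t^2)^k) * Real.exp (-(t^2)/8) :=
    mul_le_mul_of_nonneg_right h1 e3.le
  nlinarith [h5, h4, e1]

lemma scaled_bound (k : ℕ) {ε : ℝ} (hε : 0 < ε) (u : ℝ) :
    |u|^k * Real.exp (-(u^2)/(8*ε)) ≤ ε^((k:ℝ)/2) * (1 + 8^k * (k.factorial : ℝ)) := by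
  have hs : (0:ℝ) < Real.sqrt ε := Real.sqrt_pos.mpr hε
  set t := |u| / Real.sqrt ε with ht_def
  have ht : 0 ≤ t := by positivity
  have hu : |u| = Real.sqrt ε * t := by rw [ht_def]; field_simp [hs.ne']
  have hu2 : u^2 = ε * t^2 := by
    have : |u|^2 = u^2 := sq_abs u
    rw [← this, hu, mul_pow, Real.sq_sqrt hε.le]
  have hpow : |u|^k = ε^((k:ℝ)/2) * t^k := by
    rw [hu, mul_pow]
    congr 1
    rw [show Real.sqrt ε = ε ^ (1/2 : ℝ) from Real.sqrt_eq_rpow ε,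
      ← Real.rpow_natCast (ε ^ (1/2:ℝ)) k, ← Real.rpow_mul hε.le]
    ring_nf
  have hexp : -(u^2)/(8*ε) = -(t^2)/8 := by
    rw [hu2]; field_simp
  rw [hpow, hexp, mul_assoc]
  exact mul_le_mul_of_nonneg_left (pow_mul_exp_le k t ht) (by positivity)

lemma integrable_abs_rpow_mul_exp {b s : ℝ} (hb : 0 < b) (hs : -1 < s) :
    Integrable (fun x : ℝ => |x| ^ s * Real.exp (-b * x^2)) := by
  rw [← integrableOn_univ, ← Set.Iio_union_Ici (a := (0:ℝ)), integrableOn_union]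
  constructor
  · have h := (integrable_rpow_mul_exp_neg_mul_sq hb hs).comp_neg
    apply (h.integrableOn).congr_fun ?_ measurableSet_Iio
    intro x hx
    simp only
    rw [abs_of_neg hx, neg_sq]
  · apply ((integrable_rpow_mul_exp_neg_mul_sq hb hs).integrableOn).congr_fun ?_
      measurableSet_Ici
    intro x hx
    simp only
    rw [abs_of_nonneg hx]

lemma gaussq_integrable {b : ℝ} (hb : 0 < b) {q : ℝ} (hq : 0 < q) (C₀ : ℝ) :
    Integrable (fun x : ℝ => C₀ * (1 + |x| ^ q) * Real.exp (-b * x^2)) := by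
  have h1 : Integrable (fun x : ℝ => Real.exp (-b * x^2)) := integrable_exp_neg_mul_sq hb
  have h2 : Integrable (fun x : ℝ => |x| ^ q * Real.exp (-b * x^2)) :=
    integrable_abs_rpow_mul_exp hb (by linarith)
  have h3 := (h1.add h2).const_mul C₀
  have he : (fun x : ℝ => C₀ * (1 + |x| ^ q) * Real.exp (-b * x^2)) =
      fun x : ℝ => C₀ * (Real.exp (-b * x^2) + |x| ^ q * Real.exp (-b * x^2)) := by
    funext x; ring
  rw [he]; exact h3

lemma expW_le {ε : ℝ} (hε : 0 < ε) (hε2 : ε ≤ 2) (x : ℝ) :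
    Real.exp (-((x^2-1)^2/4)/ε) ≤ Real.exp (3/8) * Real.exp (-(1/8) * x^2) := by
  rw [← Real.exp_add]
  apply Real.exp_le_exp.mpr
  have hW0 : (0:ℝ) ≤ (x^2-1)^2/4 := by positivity
  have h1 : (x^2-1)^2/4/2 ≤ (x^2-1)^2/4/ε :=
    div_le_div_of_nonneg_left hW0 hε hε2
  have h2 : -((x^2-1)^2/4)/ε ≤ -((x^2-1)^2/4)/2 := by
    rw [neg_div, neg_div, neg_le_neg_iff]; exact h1
  have h3 : -((x^2-1)^2/4)/2 ≤ 3/8 + -(1/8) * x^2 := by nlinarith [sq_nonneg (x^2-3/2)]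
  linarith

lemma intExpW {ε : ℝ} (hε : 0 < ε) (hε2 : ε ≤ 2) :
    Integrable (fun x : ℝ => Real.exp (-((x^2-1)^2/4)/ε)) := by
  apply Integrable.mono' (((integrable_exp_neg_mul_sq
    (show (0:ℝ) < 1/8 by norm_num)).const_mul (Real.exp (3/8))))
  · exact (Real.continuous_exp.comp (by continuity)).aestronglyMeasurable
  · refine Filter.Eventually.of_forall fun x => ?_
    rw [Real.norm_eq_abs, abs_of_pos (Real.exp_pos _)]
    exact expW_le hε hε2 x

lemma intShiftBase (k : ℕ) {ε : ℝ} (hε : 0 < ε) :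
    Integrable (fun u : ℝ => |u|^k * Real.exp (-(u^2)/(4*ε))) := by
  have h := integrable_abs_rpow_mul_exp (show (0:ℝ) < 1/(4*ε) by positivity)
    (show (-1:ℝ) < (k:ℝ) by linarith [Nat.cast_nonneg (α := ℝ) k])
  have he : (fun u : ℝ => |u|^k * Real.exp (-(u^2)/(4*ε))) =
      fun u : ℝ => |u| ^ (k:ℝ) * Real.exp (-(1/(4*ε)) * u^2) := by
    funext u
    rw [Real.rpow_natCast]
    congr 1
    congr 1
    field_simp
  rw [he]; exact h

lemma intShift (k : ℕ) {ε : ℝ} (hε : 0 < ε) (c : ℝ) :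
    Integrable (fun x : ℝ => |x - c|^k * Real.exp (-((x-c)^2)/(4*ε))) :=
  (intShiftBase k hε).comp_sub_right c

lemma intGaussScale {ε : ℝ} (hε : 0 < ε) :
    Integrable (fun u : ℝ => Real.exp (-(u^2)/(8*ε))) := by
  have h := integrable_exp_neg_mul_sq (show (0:ℝ) < 1/(8*ε) by positivity)
  have he : (fun u : ℝ => Real.exp (-(u^2)/(8*ε))) =
      fun u : ℝ => Real.exp (-(1/(8*ε)) * u^2) := by
    funext u; congr 1; field_simp
  rw [he]; exact h

lemma gaussScale_val {ε : ℝ} (hε : 0 < ε) :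
    ∫ u : ℝ, Real.exp (-(u^2)/(8*ε)) = Real.sqrt (π*8) * Real.sqrt ε := by
  have h := integral_gaussian (1/(8*ε))
  have e1 : (fun u : ℝ => Real.exp (-(u^2)/(8*ε))) =
      fun u : ℝ => Real.exp (-(1/(8*ε)) * u^2) := by
    funext u; congr 1; field_simp
  rw [e1, h, show π / (1/(8*ε)) = (π*8)*ε by field_simp,
    Real.sqrt_mul (by positivity)]

lemma denom_lb {ε : ℝ} (hε : 0 < ε) (hε1 : ε ≤ 1) :
    Real.exp (-(9/4)) * Real.sqrt ε ≤ ∫ x : ℝ, Real.exp (-((x^2-1)^2/4)/ε) := by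
  have hint := intExpW hε (by linarith)
  have hs0 : 0 < Real.sqrt ε := Real.sqrt_pos.mpr hε
  have hs1 : Real.sqrt ε ≤ 1 := by
    rw [show (1:ℝ) = Real.sqrt 1 by simp]
    exact Real.sqrt_le_sqrt hε1
  have hb : ∀ x ∈ Set.Icc (1:ℝ) (1 + Real.sqrt ε),
      Real.exp (-(9/4)) ≤ Real.exp (-((x^2-1)^2/4)/ε) := by
    intro x hx
    apply Real.exp_le_exp.mpr
    rw [neg_div]
    apply neg_le_neg
    rw [div_le_iff₀ hε]
    have h1 : 0 ≤ x - 1 := by linarith [hx.1]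
    have h2 : x - 1 ≤ Real.sqrt ε := by linarith [hx.2]
    have h3 : (x-1)^2 ≤ ε := by nlinarith [Real.sq_sqrt hε.le]
    have h4 : x ≤ 2 := by linarith
    nlinarith [sq_nonneg (x+1), sq_nonneg (x-1)]
  calc Real.exp (-(9/4)) * Real.sqrt ε
      = Real.exp (-(9/4)) * (volume (Set.Icc (1:ℝ) (1 + Real.sqrt ε))).toReal := by
        rw [Real.volume_Icc]
        congr 1
        rw [show 1 + Real.sqrt ε - 1 = Real.sqrt ε by ring, ENNReal.toReal_ofReal hs0.le]
    _ ≤ ∫ x in Set.Icc (1:ℝ) (1 + Real.sqrt ε), Real.exp (-((x^2-1)^2/4)/ε) :=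
        setIntegral_ge_of_const_le_real measurableSet_Icc
          (by rw [Real.volume_Icc]; exact ENNReal.ofReal_ne_top) hb hint.integrableOn
    _ ≤ ∫ x : ℝ, Real.exp (-((x^2-1)^2/4)/ε) :=
        setIntegral_le_integral hint
          (Filter.Eventually.of_forall fun x => (Real.exp_pos _).le)

lemma intTail {q : ℝ} (hq : 0 < q) {C₀ : ℝ} (hC₀ : 0 ≤ C₀) :
    Integrable (fun x : ℝ => C₀ * (1 + |x|^q) * Real.exp (-((x^2-1)^2/4)/2)) := by
  apply Integrable.mono' (gaussq_integrable (show (0:ℝ) < 1/8 by norm_num) hq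
    (C₀ * Real.exp (3/8)))
  · apply Continuous.aestronglyMeasurable
    exact (continuous_const.mul (continuous_const.add
      (continuous_abs.rpow_const (fun x => Or.inr hq.le)))).mul
      (Real.continuous_exp.comp (by continuity))
  · refine Filter.Eventually.of_forall fun x => ?_
    have h1 : (0:ℝ) ≤ 1 + |x|^q := by positivity
    rw [Real.norm_eq_abs, abs_of_nonneg (by positivity)]
    calc C₀ * (1 + |x|^q) * Real.exp (-((x^2-1)^2/4)/2)
        ≤ C₀ * (1 + |x|^q) * (Real.exp (3/8) * Real.exp (-(1/8) * x^2)) := by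
          apply mul_le_mul_of_nonneg_left (expW_le two_pos le_rfl x) (by positivity)
      _ = C₀ * Real.exp (3/8) * (1 + |x|^q) * Real.exp (-(1/8) * x^2) := by ring

lemma intNum {H : ℝ → ℝ} (hHc : Continuous H) {C₀ q : ℝ} (hC₀ : 0 ≤ C₀) (hq : 0 < q)
    (hg : ∀ x, |H x| ≤ C₀ * (1 + |x|^q)) {ε : ℝ} (hε : 0 < ε) (hε2 : ε ≤ 2) :
    Integrable (fun x : ℝ => H x * Real.exp (-((x^2-1)^2/4)/ε)) := by
  apply Integrable.mono' (gaussq_integrable (show (0:ℝ) < 1/8 by norm_num) hq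
    (C₀ * Real.exp (3/8)))
  · exact (hHc.mul (Real.continuous_exp.comp (by continuity))).aestronglyMeasurable
  · refine Filter.Eventually.of_forall fun x => ?_
    rw [Real.norm_eq_abs, abs_mul, abs_of_pos (Real.exp_pos _)]
    calc |H x| * Real.exp (-((x^2-1)^2/4)/ε)
        ≤ (C₀ * (1 + |x|^q)) * (Real.exp (3/8) * Real.exp (-(1/8) * x^2)) :=
          mul_le_mul (hg x) (expW_le hε hε2 x) (Real.exp_pos _).le (by positivity)
      _ = C₀ * Real.exp (3/8) * (1 + |x|^q) * Real.exp (-(1/8) * x^2) := by ring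

lemma I_bound (k : ℕ) {ε : ℝ} (hε : 0 < ε) (c : ℝ) :
    (∫ x : ℝ, |x - c|^k * Real.exp (-((x-c)^2)/(4*ε))) ≤
      ε ^ ((k:ℝ)/2) * (1 + 8^k * (k.factorial:ℝ)) * (Real.sqrt (π*8) * Real.sqrt ε) := by
  have h0 : (∫ x : ℝ, |x - c|^k * Real.exp (-((x-c)^2)/(4*ε)))
      = ∫ u : ℝ, |u|^k * Real.exp (-(u^2)/(4*ε)) :=
    integral_sub_right_eq_self (fun u => |u|^k * Real.exp (-(u^2)/(4*ε))) c
  rw [h0, ← gaussScale_val hε, ← integral_const_mul]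
  apply integral_mono (intShiftBase k hε) ((intGaussScale hε).const_mul _)
  intro u
  have e1 : Real.exp (-(u^2)/(4*ε)) = Real.exp (-(u^2)/(8*ε)) * Real.exp (-(u^2)/(8*ε)) := by
    rw [← Real.exp_add]; congr 1; field_simp; ring
  calc |u|^k * Real.exp (-(u^2)/(4*ε))
      = (|u|^k * Real.exp (-(u^2)/(8*ε))) * Real.exp (-(u^2)/(8*ε)) := by rw [e1]; ring
    _ ≤ (ε ^ ((k:ℝ)/2) * (1 + 8^k * (k.factorial:ℝ))) * Real.exp (-(u^2)/(8*ε)) :=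
        mul_le_mul_of_nonneg_right (scaled_bound k hε u) (Real.exp_pos _).le

set_option maxHeartbeats 2000000 in
theorem stmt16 (V : ℝ → ℝ) (hV : ∀ x : ℝ, V x = x ^ 4 / 4 - x ^ 2 / 2)
    (n : ℕ) (H : ℝ → ℝ) (hH : ContDiff ℝ (n + 1) H)
    (hvan : ∀ i ≤ n, iteratedDeriv i H 1 = 0 ∧ iteratedDeriv i H (-1) = 0)
    (C₀ q : ℝ) (hC₀ : 0 < C₀) (hq : 0 < q)
    (hgrowth : ∀ x : ℝ, |H x| ≤ C₀ * (1 + |x| ^ q)) :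
    ∃ ε₀ C : ℝ, 0 < ε₀ ∧ 0 < C ∧ ∀ ε : ℝ, 0 < ε → ε < ε₀ →
      |(∫ y : ℝ, Real.exp (-(V y) / ε))⁻¹ * ∫ x : ℝ, H x * Real.exp (-(V x) / ε)|
        ≤ C * ε ^ (((n : ℝ) + 1) / 2) := by
  obtain ⟨M₁, hM₁pos, hM₁⟩ := vanish_bound 1 n H hH (fun i hi => (hvan i hi).1)
  obtain ⟨M₂, hM₂pos, hM₂⟩ := vanish_bound (-1) n H hH (fun i hi => (hvan i hi).2)
  obtain ⟨Cm, hCm_def⟩ : ∃ c : ℝ, c = 1 + 8^(n+1) * ((n+1).factorial : ℝ) := ⟨_, rfl⟩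
  have hCm : 0 < Cm := by rw [hCm_def]; positivity
  obtain ⟨K, hK_def⟩ : ∃ c : ℝ, c = Real.sqrt (π*8) := ⟨_, rfl⟩
  have hK : 0 < K := by rw [hK_def]; exact Real.sqrt_pos.mpr (by positivity)
  obtain ⟨J₀, hJ_def⟩ : ∃ c : ℝ, c = ∫ x : ℝ, C₀ * (1 + |x|^q) * Real.exp (-((x^2-1)^2/4)/2) :=
    ⟨_, rfl⟩
  have hJ0 : 0 ≤ J₀ := by rw [hJ_def]; exact integral_nonneg (fun x => by positivity)
  obtain ⟨F2, hF2_def⟩ : ∃ c : ℝ, c = ((n+2).factorial : ℝ) := ⟨_, rfl⟩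
  have hF2 : 0 < F2 := by rw [hF2_def]; positivity
  obtain ⟨Cval, hCval_def⟩ : ∃ c : ℝ, c = Real.exp (9/4) * ((M₁ + M₂) * Cm * K + J₀ * F2) + 1 :=
    ⟨_, rfl⟩
  have hCval : 0 < Cval := by
    rw [hCval_def]
    have : 0 ≤ Real.exp (9/4) * ((M₁ + M₂) * Cm * K + J₀ * F2) := by positivity
    linarith
  refine ⟨1, Cval, one_pos, hCval, ?_⟩
  intro ε hε hε1
  have hε1' : ε ≤ 1 := hε1.le
  obtain ⟨s, hs_def⟩ : ∃ c : ℝ, c = Real.sqrt ε := ⟨_, rfl⟩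
  have hs : 0 < s := by rw [hs_def]; exact Real.sqrt_pos.mpr hε
  obtain ⟨E, hE_def⟩ : ∃ c : ℝ, c = ε ^ (((n:ℝ) + 1)/2) := ⟨_, rfl⟩
  have hE : 0 < E := by rw [hE_def]; exact Real.rpow_pos_of_pos hε _
  -- reduction from V to W
  have hVW : ∀ y : ℝ, Real.exp (-(V y) / ε) =
      Real.exp (1/(4*ε)) * Real.exp (-((y^2-1)^2/4)/ε) := by
    intro y
    rw [← Real.exp_add]
    congr 1
    rw [hV y]
    field_simp
    ring
  have hDW : (∫ y : ℝ, Real.exp (-(V y) / ε)) =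
      Real.exp (1/(4*ε)) * ∫ y : ℝ, Real.exp (-((y^2-1)^2/4)/ε) := by
    simp_rw [hVW]
    exact integral_const_mul _ _
  have hNW : (∫ x : ℝ, H x * Real.exp (-(V x) / ε)) =
      Real.exp (1/(4*ε)) * ∫ x : ℝ, H x * Real.exp (-((x^2-1)^2/4)/ε) := by
    simp_rw [hVW]
    rw [← integral_const_mul]
    congr 1; funext x; ring
  obtain ⟨DW, hDW_def⟩ : ∃ c : ℝ, c = ∫ y : ℝ, Real.exp (-((y^2-1)^2/4)/ε) := ⟨_, rfl⟩
  obtain ⟨NW, hNW_def⟩ : ∃ c : ℝ, c = ∫ x : ℝ, H x * Real.exp (-((x^2-1)^2/4)/ε) := ⟨_, rfl⟩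
  rw [← hDW_def] at hDW
  rw [← hNW_def] at hNW
  have hred : (∫ y : ℝ, Real.exp (-(V y) / ε))⁻¹ * (∫ x : ℝ, H x * Real.exp (-(V x) / ε))
      = DW⁻¹ * NW := by
    rw [hDW, hNW, mul_inv]
    rw [show (Real.exp (1/(4*ε)))⁻¹ * DW⁻¹ * (Real.exp (1/(4*ε)) * NW)
      = ((Real.exp (1/(4*ε)))⁻¹ * Real.exp (1/(4*ε))) * (DW⁻¹ * NW) by ring,
      inv_mul_cancel₀ (Real.exp_ne_zero _), one_mul]
  rw [hred]
  -- denominator lower bound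
  have hDlb : Real.exp (-(9/4)) * s ≤ DW := by
    rw [hs_def, hDW_def]; exact denom_lb hε hε1'
  have hDpos : 0 < DW := lt_of_lt_of_le (by positivity) hDlb
  -- pointwise bound on the numerator integrand
  obtain ⟨e9, he9_def⟩ : ∃ c : ℝ, c = Real.exp (-(9/(8*ε))) := ⟨_, rfl⟩
  have he9 : 0 < e9 := by rw [he9_def]; exact Real.exp_pos _
  have key : ∀ x : ℝ, |H x * Real.exp (-((x^2-1)^2/4)/ε)| ≤
      M₁ * (|x - 1|^(n+1) * Real.exp (-((x-1)^2)/(4*ε)))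
      + M₂ * (|x - (-1)|^(n+1) * Real.exp (-((x-(-1))^2)/(4*ε)))
      + e9 * (C₀ * (1 + |x|^q) * Real.exp (-((x^2-1)^2/4)/2)) := by
    intro x
    have ht1 : 0 ≤ M₁ * (|x - 1|^(n+1) * Real.exp (-((x-1)^2)/(4*ε))) := by positivity
    have ht2 : 0 ≤ M₂ * (|x - (-1)|^(n+1) * Real.exp (-((x-(-1))^2)/(4*ε))) := by positivity
    have ht3 : 0 ≤ e9 * (C₀ * (1 + |x|^q) * Real.exp (-((x^2-1)^2/4)/2)) := by
      apply mul_nonneg he9.le; positivity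
    rw [abs_mul, abs_of_pos (Real.exp_pos _)]
    rcases le_total 2 |x| with hx | hx
    · -- tail |x| ≥ 2
      have haux : (0:ℝ) ≤ (|x| - 2) * (|x| + 2) :=
        mul_nonneg (by linarith) (by positivity)
      have hx2 : 4 ≤ x^2 := by nlinarith [sq_abs x, haux]
      have hW94 : 9/4 ≤ (x^2-1)^2/4 := by nlinarith [hx2]
      have hsplit : Real.exp (-((x^2-1)^2/4)/ε) ≤ e9 * Real.exp (-((x^2-1)^2/4)/2) := by
        rw [he9_def, ← Real.exp_add]
        apply Real.exp_le_exp.mpr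
        have hA : (9:ℝ) ≤ (x^2-1)^2 := by nlinarith [hx2]
        have c1 : (9/8 - (x^2-1)^2/4 : ℝ) ≤ 0 := by linarith
        have hi : (1:ℝ) ≤ ε⁻¹ := one_le_inv_iff₀.mpr ⟨hε, hε1'⟩
        have c2 : (9/8 - (x^2-1)^2/4)/ε ≤ 9/8 - (x^2-1)^2/4 := by
          rw [div_eq_mul_inv]
          calc (9/8 - (x^2-1)^2/4) * ε⁻¹ ≤ (9/8 - (x^2-1)^2/4) * 1 :=
                mul_le_mul_of_nonpos_left hi c1
            _ = 9/8 - (x^2-1)^2/4 := mul_one _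
        have r : -((x^2-1)^2/4)/ε - (-(9/(8*ε))) = (9/8 - (x^2-1)^2/4)/ε := by
          rw [show (9:ℝ)/(8*ε) = (9/8)/ε from by rw [div_div]]
          ring
        have c3 : 9/8 - (x^2-1)^2/4 ≤ -((x^2-1)^2/4)/2 := by linarith
        linarith [le_trans c2 c3]
      calc |H x| * Real.exp (-((x^2-1)^2/4)/ε)
          ≤ (C₀ * (1 + |x|^q)) * (e9 * Real.exp (-((x^2-1)^2/4)/2)) :=
            mul_le_mul (hgrowth x) hsplit (Real.exp_pos _).le (by positivity)
        _ = e9 * (C₀ * (1 + |x|^q) * Real.exp (-((x^2-1)^2/4)/2)) := by ring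
        _ ≤ _ := by linarith
    · rcases le_total 0 x with hx0 | hx0
      · -- x ∈ [0,2]
        have hxm : x ∈ Set.Icc (1-1 : ℝ) (1+1) := by
          constructor
          · norm_num; linarith
          · have := abs_le.mp hx; norm_num; linarith [this.2]
        have h1 : |H x| ≤ M₁ * |x - 1|^(n+1) := hM₁ x hxm
        have h2 : Real.exp (-((x^2-1)^2/4)/ε) ≤ Real.exp (-((x-1)^2)/(4*ε)) := by
          apply Real.exp_le_exp.mpr
          rw [neg_div, neg_div, neg_le_neg_iff, div_le_div_iff₀ (by positivity) hε]
          have h5 : 0 ≤ (x-1)^2 * (x^2 + 2*x) :=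
            mul_nonneg (sq_nonneg _) (by nlinarith)
          nlinarith [hε.le, mul_nonneg (mul_nonneg (sq_nonneg (x-1)) (show (0:ℝ) ≤ x^2 + 2*x by nlinarith)) hε.le]
        calc |H x| * Real.exp (-((x^2-1)^2/4)/ε)
            ≤ (M₁ * |x - 1|^(n+1)) * Real.exp (-((x-1)^2)/(4*ε)) :=
              mul_le_mul h1 h2 (Real.exp_pos _).le (by positivity)
          _ = M₁ * (|x - 1|^(n+1) * Real.exp (-((x-1)^2)/(4*ε))) := by ring
          _ ≤ _ := by linarith
      · -- x ∈ [-2,0]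
        have hxm : x ∈ Set.Icc (-1-1 : ℝ) (-1+1) := by
          constructor
          · have := abs_le.mp hx; norm_num; linarith [this.1]
          · norm_num; linarith
        have h1 : |H x| ≤ M₂ * |x - (-1)|^(n+1) := hM₂ x hxm
        have h2 : Real.exp (-((x^2-1)^2/4)/ε) ≤ Real.exp (-((x-(-1))^2)/(4*ε)) := by
          apply Real.exp_le_exp.mpr
          rw [neg_div, neg_div, neg_le_neg_iff, div_le_div_iff₀ (by positivity) hε]
          nlinarith [hε.le, mul_nonneg (mul_nonneg (sq_nonneg (x+1)) (show (0:ℝ) ≤ x^2 - 2*x by nlinarith)) hε.le]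
        calc |H x| * Real.exp (-((x^2-1)^2/4)/ε)
            ≤ (M₂ * |x - (-1)|^(n+1)) * Real.exp (-((x-(-1))^2)/(4*ε)) :=
              mul_le_mul h1 h2 (Real.exp_pos _).le (by positivity)
          _ = M₂ * (|x - (-1)|^(n+1) * Real.exp (-((x-(-1))^2)/(4*ε))) := by ring
          _ ≤ _ := by linarith
  -- integrability
  have int1 : Integrable (fun x : ℝ =>
      M₁ * (|x - 1|^(n+1) * Real.exp (-((x-1)^2)/(4*ε)))) :=
    ((intShift (n+1) hε 1).const_mul M₁)
  have int2 : Integrable (fun x : ℝ =>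
      M₂ * (|x - (-1)|^(n+1) * Real.exp (-((x-(-1))^2)/(4*ε)))) :=
    ((intShift (n+1) hε (-1)).const_mul M₂)
  have int3 : Integrable (fun x : ℝ =>
      e9 * (C₀ * (1 + |x|^q) * Real.exp (-((x^2-1)^2/4)/2))) :=
    ((intTail hq hC₀.le).const_mul e9)
  have intN : Integrable (fun x : ℝ => H x * Real.exp (-((x^2-1)^2/4)/ε)) :=
    intNum hH.continuous hC₀.le hq hgrowth hε (by linarith)
  -- numerator bound
  have hNabs : |NW| ≤ ∫ x : ℝ, |H x * Real.exp (-((x^2-1)^2/4)/ε)| := by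
    rw [hNW_def]
    have h0 := norm_integral_le_integral_norm (μ := volume)
      (f := fun x : ℝ => H x * Real.exp (-((x^2-1)^2/4)/ε))
    simp only [Real.norm_eq_abs] at h0
    exact h0
  have hNmono : (∫ x : ℝ, |H x * Real.exp (-((x^2-1)^2/4)/ε)|) ≤
      ∫ x : ℝ, (M₁ * (|x - 1|^(n+1) * Real.exp (-((x-1)^2)/(4*ε)))
      + M₂ * (|x - (-1)|^(n+1) * Real.exp (-((x-(-1))^2)/(4*ε)))
      + e9 * (C₀ * (1 + |x|^q) * Real.exp (-((x^2-1)^2/4)/2))) :=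
    integral_mono intN.abs ((int1.add int2).add int3) key
  have hsplitF : (∫ x : ℝ, (M₁ * (|x - 1|^(n+1) * Real.exp (-((x-1)^2)/(4*ε)))
      + M₂ * (|x - (-1)|^(n+1) * Real.exp (-((x-(-1))^2)/(4*ε)))
      + e9 * (C₀ * (1 + |x|^q) * Real.exp (-((x^2-1)^2/4)/2))))
      = M₁ * (∫ x : ℝ, |x - 1|^(n+1) * Real.exp (-((x-1)^2)/(4*ε)))
      + M₂ * (∫ x : ℝ, |x - (-1)|^(n+1) * Real.exp (-((x-(-1))^2)/(4*ε)))
      + e9 * J₀ := by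
    have int12 : Integrable (fun x : ℝ =>
        M₁ * (|x - 1|^(n+1) * Real.exp (-((x-1)^2)/(4*ε)))
        + M₂ * (|x - (-1)|^(n+1) * Real.exp (-((x-(-1))^2)/(4*ε)))) := int1.add int2
    rw [integral_add int12 int3, integral_add int1 int2,
      integral_const_mul, integral_const_mul, integral_const_mul, hJ_def]
  have hcast : (((n+1:ℕ)):ℝ)/2 = ((n:ℝ)+1)/2 := by push_cast; ring
  have hIb : ∀ c : ℝ, (∫ x : ℝ, |x - c|^(n+1) * Real.exp (-((x-c)^2)/(4*ε)))
      ≤ E * Cm * (K * s) := by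
    intro c
    have := I_bound (n+1) hε c
    rw [hcast] at this
    rw [hE_def, hCm_def, hK_def, hs_def]
    exact this
  have hnum : |NW| ≤ M₁ * (E * Cm * (K * s)) + M₂ * (E * Cm * (K * s)) + e9 * J₀ := by
    have b1 := hIb 1
    have b2 := hIb (-1)
    have c1 : M₁ * (∫ x : ℝ, |x - 1|^(n+1) * Real.exp (-((x-1)^2)/(4*ε)))
        ≤ M₁ * (E * Cm * (K * s)) := mul_le_mul_of_nonneg_left b1 hM₁pos.le
    have c2 : M₂ * (∫ x : ℝ, |x - (-1)|^(n+1) * Real.exp (-((x-(-1))^2)/(4*ε)))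
        ≤ M₂ * (E * Cm * (K * s)) := mul_le_mul_of_nonneg_left b2 hM₂pos.le
    linarith [hNabs, hNmono, hsplitF.le, hsplitF.ge]
  -- tail smallness
  have t_tail : e9 ≤ F2 * (E * s) := by
    have hx9 : (0:ℝ) < 9/(8*ε) := by positivity
    have h := Real.pow_div_factorial_le_exp (x := 9/(8*ε)) hx9.le (n+2)
    have hpos : 0 < (9/(8*ε))^(n+2) / ((n+2).factorial : ℝ) := by positivity
    have h2 : e9 ≤ ((n+2).factorial : ℝ) / (9/(8*ε))^(n+2) := by
      rw [he9_def, Real.exp_neg, inv_eq_one_div]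
      calc 1 / Real.exp (9/(8*ε)) ≤ 1 / ((9/(8*ε))^(n+2) / ((n+2).factorial : ℝ)) :=
            one_div_le_one_div_of_le hpos h
        _ = ((n+2).factorial : ℝ) / (9/(8*ε))^(n+2) := by
            rw [one_div_div]
    have h3 : ((n+2).factorial : ℝ) / (9/(8*ε))^(n+2)
        = ((n+2).factorial : ℝ) * (8*ε/9)^(n+2) := by
      rw [div_eq_mul_inv, ← inv_pow, inv_div]
    have h4 : (8*ε/9)^(n+2) ≤ ε^(n+2) :=
      pow_le_pow_left₀ (by positivity) (by linarith) _
    have h5 : (ε:ℝ)^(n+2) ≤ E * s := by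
      have hs_eq : s = ε ^ (1/2 : ℝ) := by rw [hs_def]; exact Real.sqrt_eq_rpow ε
      calc ε^(n+2) = ε ^ (((n+2 : ℕ)):ℝ) := (Real.rpow_natCast ε (n+2)).symm
        _ ≤ ε ^ (((n:ℝ)+1)/2 + 1/2) :=
            Real.rpow_le_rpow_of_exponent_ge hε hε1' (by push_cast; linarith)
        _ = E * s := by rw [Real.rpow_add hε, hE_def, hs_eq]
    calc e9 ≤ ((n+2).factorial : ℝ) * (8*ε/9)^(n+2) := by rw [← h3]; exact h2
      _ ≤ ((n+2).factorial : ℝ) * ε^(n+2) := mul_le_mul_of_nonneg_left h4 (by positivity)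
      _ ≤ F2 * (E * s) := by rw [hF2_def]; exact mul_le_mul_of_nonneg_left h5 (by positivity)
  -- final assembly
  have habs_eq : |DW⁻¹ * NW| = |NW| / DW := by
    rw [abs_mul, abs_inv, abs_of_pos hDpos, inv_mul_eq_div]
  rw [habs_eq]
  have hnum_nonneg : 0 ≤ M₁ * (E * Cm * (K * s)) + M₂ * (E * Cm * (K * s)) + e9 * J₀ := by
    have h1 : 0 ≤ M₁ * (E * Cm * (K * s)) :=
      mul_nonneg hM₁pos.le (mul_nonneg (mul_nonneg hE.le hCm.le) (mul_nonneg hK.le hs.le))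
    have h2 : 0 ≤ M₂ * (E * Cm * (K * s)) :=
      mul_nonneg hM₂pos.le (mul_nonneg (mul_nonneg hE.le hCm.le) (mul_nonneg hK.le hs.le))
    have h3 : 0 ≤ e9 * J₀ := mul_nonneg he9.le hJ0
    linarith
  have hdiv : |NW| / DW ≤ (M₁ * (E * Cm * (K * s)) + M₂ * (E * Cm * (K * s)) + e9 * J₀)
      / (Real.exp (-(9/4)) * s) :=
    div_le_div₀ hnum_nonneg hnum (show (0:ℝ) < Real.exp (-(9/4)) * s by positivity) hDlb
  have hfinal : (M₁ * (E * Cm * (K * s)) + M₂ * (E * Cm * (K * s)) + e9 * J₀)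
      / (Real.exp (-(9/4)) * s) ≤ Cval * E := by
    rw [div_le_iff₀ (show (0:ℝ) < Real.exp (-(9/4)) * s by positivity)]
    have hcanc : Real.exp (-(9/4)) * Real.exp (9/4) = 1 := by
      rw [← Real.exp_add]; norm_num
    have hJtail : e9 * J₀ ≤ F2 * (E * s) * J₀ :=
      mul_le_mul_of_nonneg_right t_tail hJ0
    have hexpand : Cval * E * (Real.exp (-(9/4)) * s)
        = (M₁ + M₂) * Cm * K * E * s + J₀ * F2 * E * s
          + Real.exp (-(9/4)) * s * E := by
      rw [hCval_def]
      linear_combination (E * s * ((M₁ + M₂) * Cm * K + J₀ * F2)) * hcanc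
    rw [hexpand]
    have hrest : 0 ≤ Real.exp (-(9/4)) * s * E :=
      mul_nonneg (mul_nonneg (Real.exp_pos _).le hs.le) hE.le
    nlinarith [hJtail, hrest]
  rw [← hE_def]
  calc |NW| / DW ≤ _ := hdiv
    _ ≤ Cval * E := hfinal
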